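/- arXiv:1901.11371 — 8 statements merged into one kernel-verified Lean document; each statement's English description precedes it below -/
import Mathlib

section
/- Let A be an m×n complex matrix, s : Fin l → Fin m a selection of rows with rank (A.submatrix s id) = rank A, and q : Fin k → Fin n a selection of columns. Suppose V is a k×n complex matrix such that the row-restricted matrix satisfies A.submatrix s id = (A.submatrix s q) * V. Then A = (A.submatrix id q) * V; that is, a column interpolative decomposition computed only from the selected rows s is automatically a column interpolative decomposition of the full matrix A. -/
open Matrix

theorem column_id_from_selected_rows (m n l k : ℕ)
    (A : Matrix (Fin m) (Fin n) ℂ)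
    (s : Fin l → Fin m)
    (hrank : (A.submatrix s id).rank = A.rank)
    (q : Fin k → Fin n)
    (V : Matrix (Fin k) (Fin n) ℂ)
    (hV : A.submatrix s id = (A.submatrix s q) * V) :
    A = (A.submatrix id q) * V := by
  -- the span of the selected rows equals the span of all rows
  have hle : Submodule.span ℂ (Set.range (A.submatrix s id)) ≤
      Submodule.span ℂ (Set.range A) := by
    apply Submodule.span_mono
    rintro _ ⟨i, rfl⟩
    exact ⟨s i, rfl⟩
  have hspan : Submodule.span ℂ (Set.range (A.submatrix s id)) =
      Submodule.span ℂ (Set.range A) := by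
    apply Submodule.eq_of_le_of_finrank_eq hle
    exact (Matrix.rank_eq_finrank_span_row (A.submatrix s id)).symm.trans
      (hrank.trans (Matrix.rank_eq_finrank_span_row A))
  -- the linear map  x ↦ x - (x ∘ q) ᵥ* V  vanishes on the selected rows
  set f : (Fin n → ℂ) →ₗ[ℂ] (Fin n → ℂ) :=
    LinearMap.id - V.vecMulLinear ∘ₗ LinearMap.funLeft ℂ ℂ q with hf
  have hker : Submodule.span ℂ (Set.range A) ≤ LinearMap.ker f := by
    rw [← hspan, Submodule.span_le]
    rintro _ ⟨i, rfl⟩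
    simp only [SetLike.mem_coe, LinearMap.mem_ker, hf, LinearMap.sub_apply,
      LinearMap.id_apply, LinearMap.comp_apply, LinearMap.funLeft_apply,
      Matrix.vecMulLinear_apply]
    funext j
    have := congrFun (congrFun hV i) j
    simp only [Matrix.submatrix_apply, id_eq, Matrix.mul_apply] at this
    simp only [Pi.sub_apply, Pi.zero_apply, Matrix.vecMul, dotProduct, sub_eq_zero]
    simpa using this
  -- apply to each row of A
  ext i j
  have h0 : f (A i) = 0 := hker (Submodule.subset_span ⟨i, rfl⟩)
  have := congrFun h0 j
  simp only [hf, LinearMap.sub_apply, LinearMap.id_apply, LinearMap.comp_apply,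
    LinearMap.funLeft_apply, Matrix.vecMulLinear_apply, Pi.sub_apply, Pi.zero_apply,
    sub_eq_zero] at this
  rw [this]
  simp [Matrix.mul_apply, Matrix.vecMul, dotProduct]
end

section
/- Let A be an m×n complex matrix of rank k. Then there exist an injective map q : Fin k → Fin n selecting k columns of A and a k×n complex matrix V such that A = (A.submatrix id q) * V and V.submatrix id q = 1 (the k×k identity); that is, every rank-k matrix admits an exact column interpolative decomposition in which the interpolation matrix restricted to the skeleton columns is the identity. -/
open Matrix Submodule

theorem exists_column_interpolative_decomposition (m n k : ℕ)
    (A : Matrix (Fin m) (Fin n) ℂ) (hrank : A.rank = k) :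
    ∃ (q : Fin k → Fin n), Function.Injective q ∧
      ∃ V : Matrix (Fin k) (Fin n) ℂ,
        A = (A.submatrix id q) * V ∧ V.submatrix id q = (1 : Matrix (Fin k) (Fin k) ℂ) := by
  classical
  obtain ⟨b, hbs, hspan, hli⟩ := exists_linearIndependent ℂ (Set.range Aᵀ)
  have hbfin : b.Finite := (Set.finite_range Aᵀ).subset hbs
  haveI : Fintype b := hbfin.fintype
  have hcard : Fintype.card b = k := by
    have := finrank_span_set_eq_card (s := b) hli
    rw [hspan, ← (show A.rank = Module.finrank ℂ (span ℂ (Set.range Aᵀ)) from rank_eq_finrank_span_cols A), hrank] at this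
    exact (this.trans (Set.toFinset_card b)).symm
  let e : Fin k ≃ b := (Fintype.equivFinOfCardEq hcard).symm
  have hpre : ∀ i : Fin k, ∃ j : Fin n, Aᵀ j = (e i : Fin m → ℂ) := fun i => hbs (e i).2
  choose q hq using hpre
  have hcol : ∀ i, Aᵀ (q i) = (e i : Fin m → ℂ) := hq
  have hinj : Function.Injective q := by
    intro i i' h
    have : (e i : Fin m → ℂ) = e i' := by rw [← hcol, ← hcol, h]
    exact e.injective (Subtype.ext this)
  have hli' : LinearIndependent ℂ (fun i : Fin k => Aᵀ (q i)) := by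
    have : (fun i : Fin k => Aᵀ (q i)) = ((↑) : b → (Fin m → ℂ)) ∘ e := by
      funext i; exact hcol i
    rw [this]
    exact hli.comp e e.injective
  have hrange : Set.range (fun i : Fin k => Aᵀ (q i)) = b := by
    have : (fun i : Fin k => Aᵀ (q i)) = ((↑) : b → (Fin m → ℂ)) ∘ e := by
      funext i; exact hcol i
    rw [this, Set.range_comp, e.range_eq_univ, Set.image_univ, Subtype.range_coe]
  have hmem : ∀ j : Fin n, Aᵀ j ∈ span ℂ (Set.range (fun i : Fin k => Aᵀ (q i))) := by
    intro j
    rw [hrange, hspan]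
    exact subset_span ⟨j, rfl⟩
  have hc : ∀ j : Fin n, ∃ c : Fin k → ℂ, ∑ i, c i • Aᵀ (q i) = Aᵀ j := by
    intro j
    exact (mem_span_range_iff_exists_fun ℂ).1 (hmem j)
  choose c hcspec using hc
  refine ⟨q, hinj, fun i j => c j i, ?_, ?_⟩
  · ext x j
    have := congrFun (hcspec j) x
    simp only [Finset.sum_apply, Pi.smul_apply, smul_eq_mul, transpose_apply] at this
    simp [Matrix.mul_apply, ← this, mul_comm]
    rfl
  · ext i i'
    have h1 : ∑ i0, c (q i') i0 • Aᵀ (q i0) = Aᵀ (q i') := hcspec (q i')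
    have h2 : ∑ i0, (fun i0 => if i0 = i' then (1:ℂ) else 0) i0 • Aᵀ (q i0) = Aᵀ (q i') := by
      simp
    have := Fintype.linearIndependent_iff.1 hli'
      (fun i0 => c (q i') i0 - if i0 = i' then 1 else 0) (by
        simp only [sub_smul, Finset.sum_sub_distrib, h1]
        rw [show (∑ i0, (if i0 = i' then (1:ℂ) else 0) • Aᵀ (q i0)) = Aᵀ (q i') by simp]
        simp) i
    have h3 := sub_eq_zero.1 this
    simp [Matrix.one_apply, h3]
    exact h3
end

section
/- Let A be an m×n complex matrix of rank k. Then there exist an injective map p : Fin k → Fin m selecting k rows of A and an m×k complex matrix U such that A = U * (A.submatrix p id) and U.submatrix p id = 1 (the k×k identity); that is, every rank-k matrix admits an exact row interpolative decomposition in which the interpolation matrix restricted to the skeleton rows is the identity. -/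
open Matrix

theorem exists_row_interpolative_decomposition (m n k : ℕ)
    (A : Matrix (Fin m) (Fin n) ℂ) (hrank : A.rank = k) :
    ∃ (p : Fin k → Fin m), Function.Injective p ∧
      ∃ U : Matrix (Fin m) (Fin k) ℂ,
        A = U * (A.submatrix p id) ∧ U.submatrix p id = (1 : Matrix (Fin k) (Fin k) ℂ) := by
  classical
  have hspan : Module.finrank ℂ (Submodule.span ℂ (Set.range A)) = k := by
    rw [← hrank, A.rank_eq_finrank_span_row]; rfl
  obtain ⟨s, hs_sub, hs_span, hs_li⟩ := exists_linearIndependent ℂ (Set.range A)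
  have hs_fin : s.Finite := (Set.finite_range A).subset hs_sub
  haveI : Fintype s := hs_fin.fintype
  have hcard : Fintype.card s = k := by
    have := finrank_span_set_eq_card hs_li
    rw [hs_span, hspan] at this
    simpa [Set.toFinset_card] using this.symm
  let e : Fin k ≃ s := (Fintype.equivFinOfCardEq hcard).symm
  have hg : ∀ x : s, ∃ i, A i = (x : Fin n → ℂ) := fun x => hs_sub x.2
  choose g hgspec using hg
  set p : Fin k → Fin m := fun j => g (e j) with hp
  have hAp : ∀ j, A (p j) = ((e j : s) : Fin n → ℂ) := fun j => hgspec (e j)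
  have hpinj : Function.Injective p := by
    intro a b hab
    have : ((e a : s) : Fin n → ℂ) = ((e b : s) : Fin n → ℂ) := by
      rw [← hAp, ← hAp, hab]
    exact e.injective (Subtype.ext this)
  have hli : LinearIndependent ℂ (fun j : Fin k => A (p j)) := by
    have : LinearIndependent ℂ (fun j : Fin k => ((e j : s) : Fin n → ℂ)) :=
      hs_li.comp e e.injective
    simpa [funext hAp] using this
  set W := Submodule.span ℂ (Set.range fun j : Fin k => A (p j)) with hW
  have hrange : (Set.range fun j : Fin k => A (p j)) = s := by
    ext x
    constructor
    · rintro ⟨j, rfl⟩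
      show A (p j) ∈ s
      rw [hAp]; exact (e j).2
    · intro hx
      refine ⟨e.symm ⟨x, hx⟩, ?_⟩
      show A (p (e.symm ⟨x, hx⟩)) = x
      rw [hAp]; simp
  have hmem : ∀ i, A i ∈ W := by
    intro i
    rw [hW, hrange, hs_span]
    exact Submodule.subset_span ⟨i, rfl⟩
  let B : Module.Basis (Fin k) ℂ W := Module.Basis.span hli
  set U : Matrix (Fin m) (Fin k) ℂ := fun i j => B.repr ⟨A i, hmem i⟩ j with hU
  have hrow : ∀ i, A i = ∑ j, U i j • A (p j) := by
    intro i
    have := B.sum_repr ⟨A i, hmem i⟩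
    have hval := congrArg (Subtype.val) this
    rw [show ((⟨A i, hmem i⟩ : W) : Fin n → ℂ) = A i from rfl] at hval
    rw [← hval]
    push_cast [Submodule.coe_sum]
    refine Finset.sum_congr rfl fun j _ => ?_
    rw [Module.Basis.span_apply]
  refine ⟨p, hpinj, U, ?_, ?_⟩
  · ext i c
    rw [Matrix.mul_apply]
    have := congrFun (hrow i) c
    simpa [Matrix.submatrix] using this
  · ext j j'
    have hBj : (⟨A (p j), hmem (p j)⟩ : W) = B j := by
      apply Subtype.ext
      exact congrArg Subtype.val (Module.Basis.span_apply hli j).symm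
    rw [Matrix.submatrix_apply]
    simp only [Matrix.submatrix_apply, id, hU, hBj, Module.Basis.repr_self]
    by_cases h : j' = j
    · subst h; simp
    · simp [Finsupp.single_apply, Matrix.one_apply, Ne.symm h, h]
end

section
/- Let f : ℝ → ℝ → ℝ, let a ≤ x and c ≤ y be real numbers, and suppose that on the rectangle [a, x] × [c, y] the partial derivative ∂f/∂s (in the first variable) exists and, for each fixed first argument, is differentiable in the second variable, with mixed partial g(s, t) = ∂²f/∂t∂s continuous on the rectangle. Then there exist ξ ∈ [a, x] and η ∈ [c, y] such that f x y - f x c - f a y + f a c = g ξ η * (x - a) * (y - c). -/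
theorem mvt_second_mixed_difference
    (f f₁ g : ℝ → ℝ → ℝ) (a x c y : ℝ) (hax : a ≤ x) (hcy : c ≤ y)
    (hf₁ : ∀ s ∈ Set.Icc a x, ∀ t ∈ Set.Icc c y,
      HasDerivWithinAt (fun s' => f s' t) (f₁ s t) (Set.Icc a x) s)
    (hg : ∀ s ∈ Set.Icc a x, ∀ t ∈ Set.Icc c y,
      HasDerivWithinAt (fun t' => f₁ s t') (g s t) (Set.Icc c y) t)
    (hgc : ContinuousOn (fun p : ℝ × ℝ => g p.1 p.2) (Set.Icc a x ×ˢ Set.Icc c y)) :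
    ∃ ξ ∈ Set.Icc a x, ∃ η ∈ Set.Icc c y,
      f x y - f x c - f a y + f a c = g ξ η * (x - a) * (y - c) := by
  rcases eq_or_lt_of_le hax with rfl | hax'
  · exact ⟨a, Set.left_mem_Icc.2 le_rfl, c, Set.left_mem_Icc.2 hcy, by ring⟩
  rcases eq_or_lt_of_le hcy with rfl | hcy'
  · exact ⟨a, Set.left_mem_Icc.2 hax, c, Set.left_mem_Icc.2 le_rfl, by ring⟩
  have hcmem : c ∈ Set.Icc c y := Set.left_mem_Icc.2 hcy
  have hymem : y ∈ Set.Icc c y := Set.right_mem_Icc.2 hcy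
  -- F(s) = f s y - f s c has derivative f₁ s y - f₁ s c on [a,x]
  have hF : ∀ s ∈ Set.Icc a x,
      HasDerivWithinAt (fun s' => f s' y - f s' c) (f₁ s y - f₁ s c) (Set.Icc a x) s :=
    fun s hs => (hf₁ s hs y hymem).sub (hf₁ s hs c hcmem)
  have hFc : ContinuousOn (fun s' => f s' y - f s' c) (Set.Icc a x) :=
    fun s hs => (hF s hs).continuousWithinAt
  have hFd : ∀ s ∈ Set.Ioo a x, HasDerivAt (fun s' => f s' y - f s' c) (f₁ s y - f₁ s c) s :=
    fun s hs => (hF s (Set.Ioo_subset_Icc_self hs)).hasDerivAt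
      (Icc_mem_nhds hs.1 hs.2)
  obtain ⟨ξ, hξ, hξeq⟩ := exists_hasDerivAt_eq_slope (fun s' => f s' y - f s' c)
    (fun s => f₁ s y - f₁ s c) hax' hFc hFd
  have hξ' : ξ ∈ Set.Icc a x := Set.Ioo_subset_Icc_self hξ
  -- second MVT in t for f₁ ξ
  have hGc : ContinuousOn (fun t => f₁ ξ t) (Set.Icc c y) :=
    fun t ht => (hg ξ hξ' t ht).continuousWithinAt
  have hGd : ∀ t ∈ Set.Ioo c y, HasDerivAt (fun t' => f₁ ξ t') (g ξ t) t :=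
    fun t ht => (hg ξ hξ' t (Set.Ioo_subset_Icc_self ht)).hasDerivAt
      (Icc_mem_nhds ht.1 ht.2)
  obtain ⟨η, hη, hηeq⟩ := exists_hasDerivAt_eq_slope (fun t' => f₁ ξ t')
    (fun t => g ξ t) hcy' hGc hGd
  refine ⟨ξ, hξ', η, Set.Ioo_subset_Icc_self hη, ?_⟩
  have hxa : x - a ≠ 0 := sub_ne_zero.2 hax'.ne'
  have hyc : y - c ≠ 0 := sub_ne_zero.2 hcy'.ne'
  field_simp at hξeq hηeq
  -- hξeq : f₁ ξ y - f₁ ξ c = (f x y - f x c - (f a y - f a c)) / (x - a) (after field_simp: * form)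
  nlinarith [hξeq, hηeq, sq_nonneg (x - a), sq_nonneg (y - c)]
end

section
/- Let φ : ℝ → ℝ → ℝ, let a ≤ x and c ≤ y be real numbers, and suppose that on the rectangle [a, x] × [c, y] the partial derivative ∂φ/∂s (in the first variable) exists and, for each fixed first argument, is differentiable in the second variable, with mixed partial g(s, t) = ∂²φ/∂t∂s continuous on the rectangle. Define β : ℝ → ℂ by β s = exp(-I * φ s c) and γ : ℝ → ℂ by γ t = exp(-I * (φ a t - φ a c)). Then there exist ξ ∈ [a, x] and η ∈ [c, y] such that exp(-I * φ x y) = β x * exp(-I * (g ξ η * (x - a) * (y - c))) * γ y. -/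
open Complex

theorem oscillatory_phase_separation
    (φ φ₁ g : ℝ → ℝ → ℝ) (a x c y : ℝ) (hax : a ≤ x) (hcy : c ≤ y)
    (hφ₁ : ∀ s ∈ Set.Icc a x, ∀ t ∈ Set.Icc c y,
      HasDerivWithinAt (fun s' => φ s' t) (φ₁ s t) (Set.Icc a x) s)
    (hg : ∀ s ∈ Set.Icc a x, ∀ t ∈ Set.Icc c y,
      HasDerivWithinAt (fun t' => φ₁ s t') (g s t) (Set.Icc c y) t)
    (hgc : ContinuousOn (fun p : ℝ × ℝ => g p.1 p.2) (Set.Icc a x ×ˢ Set.Icc c y))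
    (β γ : ℝ → ℂ)
    (hβ : ∀ s, β s = Complex.exp (-Complex.I * (φ s c : ℝ)))
    (hγ : ∀ t, γ t = Complex.exp (-Complex.I * ((φ a t - φ a c : ℝ)))) :
    ∃ ξ ∈ Set.Icc a x, ∃ η ∈ Set.Icc c y,
      Complex.exp (-Complex.I * (φ x y : ℝ)) =
        β x * Complex.exp (-Complex.I * ((g ξ η * (x - a) * (y - c) : ℝ))) * γ y := by
  -- reduce to a real identity
  have main : ∃ ξ ∈ Set.Icc a x, ∃ η ∈ Set.Icc c y,
      φ x y - φ x c - (φ a y - φ a c) = g ξ η * (x - a) * (y - c) := by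
    have haa : a ∈ Set.Icc a x := ⟨le_refl a, hax⟩
    have hcc : c ∈ Set.Icc c y := ⟨le_refl c, hcy⟩
    rcases eq_or_lt_of_le hax with hax' | hax'
    · exact ⟨a, haa, c, hcc, by subst hax'; ring⟩
    rcases eq_or_lt_of_le hcy with hcy' | hcy'
    · exact ⟨a, haa, c, hcc, by subst hcy'; ring⟩
    have hyy : y ∈ Set.Icc c y := ⟨hcy, le_refl y⟩
    have hxx : x ∈ Set.Icc a x := ⟨hax, le_refl x⟩
    -- first MVT in s
    have hF : ∀ s ∈ Set.Ioo a x, HasDerivAt (fun s' => φ s' y - φ s' c)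
        (φ₁ s y - φ₁ s c) s := by
      intro s hs
      have hs' : s ∈ Set.Icc a x := Set.Ioo_subset_Icc_self hs
      have h1 := (hφ₁ s hs' y hyy).sub (hφ₁ s hs' c hcc)
      exact h1.hasDerivAt (Icc_mem_nhds hs.1 hs.2)
    have hFc : ContinuousOn (fun s' => φ s' y - φ s' c) (Set.Icc a x) := by
      intro s hs
      exact ((hφ₁ s hs y hyy).sub (hφ₁ s hs c hcc)).continuousWithinAt
    obtain ⟨ξ, hξ, hξeq⟩ := exists_hasDerivAt_eq_slope (fun s' => φ s' y - φ s' c)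
      (fun s => φ₁ s y - φ₁ s c) hax' hFc hF
    have hξI : ξ ∈ Set.Icc a x := Set.Ioo_subset_Icc_self hξ
    -- second MVT in t
    have hG : ∀ t ∈ Set.Ioo c y, HasDerivAt (fun t' => φ₁ ξ t') (g ξ t) t := by
      intro t ht
      exact (hg ξ hξI t (Set.Ioo_subset_Icc_self ht)).hasDerivAt
        (Icc_mem_nhds ht.1 ht.2)
    have hGc : ContinuousOn (fun t' => φ₁ ξ t') (Set.Icc c y) := by
      intro t ht
      exact (hg ξ hξI t ht).continuousWithinAt
    obtain ⟨η, hη, hηeq⟩ := exists_hasDerivAt_eq_slope (fun t' => φ₁ ξ t')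
      (fun t => g ξ t) hcy' hGc hG
    refine ⟨ξ, hξI, η, Set.Ioo_subset_Icc_self hη, ?_⟩
    have hx0 : x - a ≠ 0 := sub_ne_zero.mpr hax'.ne'
    have hy0 : y - c ≠ 0 := sub_ne_zero.mpr hcy'.ne'
    field_simp at hξeq hηeq
    nlinarith [hξeq, hηeq]
  obtain ⟨ξ, hξ, η, hη, key⟩ := main
  refine ⟨ξ, hξ, η, hη, ?_⟩
  rw [hβ, hγ, ← Complex.exp_add, ← Complex.exp_add]
  congr 1
  have keyC : (φ x y : ℂ) - φ x c - ((φ a y : ℂ) - φ a c) =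
      ((g ξ η : ℂ)) * ((x : ℂ) - a) * ((y : ℂ) - c) := by exact_mod_cast key
  push_cast
  linear_combination (-Complex.I) * keyC
end

section
/- Let ρ : ℝ → EuclideanSpace ℝ (Fin 2) be differentiable with ‖deriv ρ s‖ ≤ c₂ for all s, let α : ℝ → ℝ be twice differentiable on (0, ∞), let κ > 0, and define F : ℝ → ℝ → ℝ by F x y = α (κ * ‖ρ x - ρ y‖). Then for all x, y with ρ x ≠ ρ y at which the mixed partial derivative ∂²F/∂y∂x exists, it satisfies |∂²F/∂y∂x (x, y)| ≤ κ² * c₂² * |deriv (deriv α) (κ * ‖ρ x - ρ y‖)| + 2 * κ * c₂² * |deriv α (κ * ‖ρ x - ρ y‖)| / ‖ρ x - ρ y‖. -/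
open RealInnerProductSpace

private lemma hasDerivAt_norm_aux {f : ℝ → EuclideanSpace ℝ (Fin 2)}
    {f' : EuclideanSpace ℝ (Fin 2)} {t : ℝ}
    (hf : HasDerivAt f f' t) (h0 : f t ≠ 0) :
    HasDerivAt (fun s => ‖f s‖) (⟪f t, f'⟫ / ‖f t‖) t := by
  have hn : ‖f t‖ ≠ 0 := norm_ne_zero_iff.mpr h0
  have h1 := hf.norm_sq.sqrt (by positivity : ‖f t‖ ^ 2 ≠ 0)
  have heq : (fun s => Real.sqrt (‖f s‖ ^ 2)) = fun s => ‖f s‖ :=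
    funext fun s => Real.sqrt_sq (norm_nonneg _)
  rw [heq] at h1
  convert h1 using 1
  rw [Real.sqrt_sq (norm_nonneg _)]
  field_simp

theorem mixed_partial_phase_bound
    (ρ : ℝ → EuclideanSpace ℝ (Fin 2)) (c₂ : ℝ)
    (hρ : Differentiable ℝ ρ) (hρ' : ∀ s, ‖deriv ρ s‖ ≤ c₂)
    (α : ℝ → ℝ)
    (hα : DifferentiableOn ℝ α (Set.Ioi (0 : ℝ)))
    (hα' : DifferentiableOn ℝ (deriv α) (Set.Ioi (0 : ℝ)))
    (κ : ℝ) (hκ : 0 < κ) (x y : ℝ) (hxy : ρ x ≠ ρ y)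
    (hmixed : DifferentiableAt ℝ
      (fun y' => deriv (fun x' => α (κ * ‖ρ x' - ρ y'‖)) x) y) :
    |deriv (fun y' => deriv (fun x' => α (κ * ‖ρ x' - ρ y'‖)) x) y| ≤
      κ ^ 2 * c₂ ^ 2 * |deriv (deriv α) (κ * ‖ρ x - ρ y‖)| +
        2 * κ * c₂ ^ 2 * |deriv α (κ * ‖ρ x - ρ y‖)| / ‖ρ x - ρ y‖ := by
  set p := deriv ρ x with hp
  set q := deriv ρ y with hq
  set v := ρ x - ρ y with hv
  set r := ‖ρ x - ρ y‖ with hr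
  have hrpos : (0 : ℝ) < r := by
    rw [hr]; exact norm_pos_iff.mpr (sub_ne_zero.mpr hxy)
  have hrne : r ≠ 0 := ne_of_gt hrpos
  have hc₂ : 0 ≤ c₂ := le_trans (norm_nonneg _) (hρ' x)
  -- the explicit formula for the inner derivative
  set g : ℝ → ℝ := fun y' =>
    deriv α (κ * ‖ρ x - ρ y'‖) * (κ * (⟪ρ x - ρ y', p⟫ / ‖ρ x - ρ y'‖)) with hg
  -- Step A: on a neighborhood of y, the inner deriv equals g
  have hstepA : ∀ y', ρ x ≠ ρ y' →
      deriv (fun x' => α (κ * ‖ρ x' - ρ y'‖)) x = g y' := by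
    intro y' hne
    have h0 : ρ x - ρ y' ≠ 0 := sub_ne_zero.mpr hne
    have hpos' : 0 < κ * ‖ρ x - ρ y'‖ :=
      mul_pos hκ (norm_pos_iff.mpr h0)
    have hin : HasDerivAt (fun x' => ρ x' - ρ y') p x := (hρ x).hasDerivAt.sub_const (ρ y')
    have hnrm : HasDerivAt (fun x' => ‖ρ x' - ρ y'‖) (⟪ρ x - ρ y', p⟫ / ‖ρ x - ρ y'‖) x :=
      hasDerivAt_norm_aux hin h0
    have hφ : HasDerivAt (fun x' => κ * ‖ρ x' - ρ y'‖)
        (κ * (⟪ρ x - ρ y', p⟫ / ‖ρ x - ρ y'‖)) x := hnrm.const_mul κ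
    have hαat : HasDerivAt α (deriv α (κ * ‖ρ x - ρ y'‖)) (κ * ‖ρ x - ρ y'‖) :=
      (hα.differentiableAt (Ioi_mem_nhds hpos')).hasDerivAt
    exact (hαat.comp x hφ).deriv
  -- Step B: g has explicit derivative at y
  have hq' : HasDerivAt (fun y' => ρ x - ρ y') (-q) y := (hρ y).hasDerivAt.const_sub (ρ x)
  have hnrm : HasDerivAt (fun y' => ‖ρ x - ρ y'‖) (⟪v, -q⟫ / r) y :=
    hasDerivAt_norm_aux hq' (sub_ne_zero.mpr hxy)
  have hφ : HasDerivAt (fun y' => κ * ‖ρ x - ρ y'‖) (κ * (⟪v, -q⟫ / r)) y :=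
    hnrm.const_mul κ
  have hκrpos : 0 < κ * r := mul_pos hκ hrpos
  have hα''at : HasDerivAt (deriv α) (deriv (deriv α) (κ * r)) (κ * r) :=
    (hα'.differentiableAt (Ioi_mem_nhds hκrpos)).hasDerivAt
  have hA : HasDerivAt (fun y' => deriv α (κ * ‖ρ x - ρ y'‖))
      (deriv (deriv α) (κ * r) * (κ * (⟪v, -q⟫ / r))) y :=
    HasDerivAt.comp (h₂ := deriv α) (h := fun y' => κ * ‖ρ x - ρ y'‖) y hα''at hφ
  have hnum : HasDerivAt (fun y' => ⟪ρ x - ρ y', p⟫) (⟪v, (0:EuclideanSpace ℝ (Fin 2))⟫ + ⟪-q, p⟫) y :=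
    HasDerivAt.inner ℝ hq' (hasDerivAt_const y p)
  have hnum' : HasDerivAt (fun y' => ⟪ρ x - ρ y', p⟫) (⟪-q, p⟫) y := by
    simpa using hnum
  have hψ : HasDerivAt (fun y' => κ * (⟪ρ x - ρ y', p⟫ / ‖ρ x - ρ y'‖))
      (κ * ((⟪-q, p⟫ * r - ⟪v, p⟫ * (⟪v, -q⟫ / r)) / r ^ 2)) y :=
    (hnum'.div hnrm hrne).const_mul κ
  have hG : HasDerivAt g
      ((deriv (deriv α) (κ * r) * (κ * (⟪v, -q⟫ / r))) * (κ * (⟪v, p⟫ / r)) +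
        deriv α (κ * r) * (κ * ((⟪-q, p⟫ * r - ⟪v, p⟫ * (⟪v, -q⟫ / r)) / r ^ 2))) y :=
    hA.mul hψ
  -- the target function agrees with g near y
  have hev : (fun y' => deriv (fun x' => α (κ * ‖ρ x' - ρ y'‖)) x) =ᶠ[nhds y] g := by
    have hopen : IsOpen {y' : ℝ | ρ x ≠ ρ y'} := by
      have : {y' : ℝ | ρ x ≠ ρ y'} = ρ ⁻¹' {ρ x}ᶜ := by
        ext y'; simp [ne_comm]
      rw [this]
      exact (isOpen_compl_singleton).preimage hρ.continuous
    filter_upwards [hopen.mem_nhds (by exact hxy)] with y' hy' using hstepA y' hy'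
  have hderiv_eq : deriv (fun y' => deriv (fun x' => α (κ * ‖ρ x' - ρ y'‖)) x) y =
      (deriv (deriv α) (κ * r) * (κ * (⟪v, -q⟫ / r))) * (κ * (⟪v, p⟫ / r)) +
        deriv α (κ * r) * (κ * ((⟪-q, p⟫ * r - ⟪v, p⟫ * (⟪v, -q⟫ / r)) / r ^ 2)) := by
    rw [hev.deriv_eq]; exact hG.deriv
  rw [hderiv_eq]
  -- Step C: bounds
  have hbv : ‖v‖ = r := rfl
  have hb1 : |⟪v, -q⟫| ≤ r * c₂ := by
    calc |⟪v, -q⟫| ≤ ‖v‖ * ‖-q‖ := abs_real_inner_le_norm _ _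
    _ = r * ‖q‖ := by rw [hbv, norm_neg]
    _ ≤ r * c₂ := by exact mul_le_mul_of_nonneg_left (hρ' y) hrpos.le
  have hb2 : |⟪v, p⟫| ≤ r * c₂ := by
    calc |⟪v, p⟫| ≤ ‖v‖ * ‖p‖ := abs_real_inner_le_norm _ _
    _ ≤ r * c₂ := by rw [hbv]; exact mul_le_mul_of_nonneg_left (hρ' x) hrpos.le
  have hb3 : |⟪-q, p⟫| ≤ c₂ * c₂ := by
    calc |⟪-q, p⟫| ≤ ‖-q‖ * ‖p‖ := abs_real_inner_le_norm _ _
    _ ≤ c₂ * c₂ := by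
        rw [norm_neg]
        exact mul_le_mul (hρ' y) (hρ' x) (norm_nonneg _) hc₂
  have hd1 : |⟪v, -q⟫ / r| ≤ c₂ := by
    rw [abs_div, abs_of_pos hrpos, div_le_iff₀ hrpos]
    linarith [hb1]
  have hd2 : |⟪v, p⟫ / r| ≤ c₂ := by
    rw [abs_div, abs_of_pos hrpos, div_le_iff₀ hrpos]
    linarith [hb2]
  have hd3 : |(⟪-q, p⟫ * r - ⟪v, p⟫ * (⟪v, -q⟫ / r)) / r ^ 2| ≤ 2 * c₂ ^ 2 / r := by
    have h1 : |⟪-q, p⟫ * r - ⟪v, p⟫ * (⟪v, -q⟫ / r)| ≤ 2 * c₂ ^ 2 * r := by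
      calc |⟪-q, p⟫ * r - ⟪v, p⟫ * (⟪v, -q⟫ / r)|
          ≤ |⟪-q, p⟫ * r| + |⟪v, p⟫ * (⟪v, -q⟫ / r)| := abs_sub _ _
        _ = |⟪-q, p⟫| * r + |⟪v, p⟫| * |⟪v, -q⟫ / r| := by
            rw [abs_mul, abs_mul, abs_of_pos hrpos]
        _ ≤ (c₂ * c₂) * r + (r * c₂) * c₂ := by
            gcongr
        _ = 2 * c₂ ^ 2 * r := by ring
    rw [abs_div, abs_of_pos (pow_pos hrpos 2), div_le_div_iff₀ (pow_pos hrpos 2) hrpos]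
    calc |⟪-q, p⟫ * r - ⟪v, p⟫ * (⟪v, -q⟫ / r)| * r ≤ (2 * c₂ ^ 2 * r) * r := by
          exact mul_le_mul_of_nonneg_right h1 hrpos.le
      _ = 2 * c₂ ^ 2 * r ^ 2 := by ring
  calc |(deriv (deriv α) (κ * r) * (κ * (⟪v, -q⟫ / r))) * (κ * (⟪v, p⟫ / r)) +
        deriv α (κ * r) * (κ * ((⟪-q, p⟫ * r - ⟪v, p⟫ * (⟪v, -q⟫ / r)) / r ^ 2))|
      ≤ |deriv (deriv α) (κ * r)| * (κ * |⟪v, -q⟫ / r|) * (κ * |⟪v, p⟫ / r|) +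
        |deriv α (κ * r)| * (κ * |(⟪-q, p⟫ * r - ⟪v, p⟫ * (⟪v, -q⟫ / r)) / r ^ 2|) := by
        refine le_trans (abs_add_le _ _) ?_
        simp only [abs_mul, abs_of_pos hκ]
        exact le_refl _
    _ ≤ |deriv (deriv α) (κ * r)| * (κ * c₂) * (κ * c₂) +
        |deriv α (κ * r)| * (κ * (2 * c₂ ^ 2 / r)) := by
        gcongr <;> positivity
    _ = κ ^ 2 * c₂ ^ 2 * |deriv (deriv α) (κ * r)| +
        2 * κ * c₂ ^ 2 * |deriv α (κ * r)| / r := by ring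
end

section
/- Let u : Fin m → ℝ, v : Fin n → ℝ, ω : ℝ, and c ≥ 0 be such that |ω * u i * v j| ≤ c for all i, j, and let D be the m×n complex matrix with entries D i j = Complex.exp (-Complex.I * (ω * u i * v j)). Then for every natural number r ≥ 1 there exists an m×n complex matrix B with rank B ≤ r such that ‖D i j - B i j‖ ≤ c^r * Real.exp c / r! for all i, j; explicitly, one may take B i j = ∑_{k=0}^{r-1} (-Complex.I * ω)^k * (u i)^k * (v j)^k / k!. -/
open Matrix

lemma exp_taylor_remainder_aux (z : ℂ) (r : ℕ) :
    ‖Complex.exp z - ∑ k ∈ Finset.range r, z ^ k / (Nat.factorial k : ℂ)‖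
      ≤ ‖z‖ ^ r * Real.exp ‖z‖ / (Nat.factorial r : ℝ) := by
  have hsum : HasSum (fun k : ℕ => z ^ k / (Nat.factorial k : ℂ)) (Complex.exp z) := by
    rw [Complex.exp_eq_exp_ℂ]
    exact NormedSpace.expSeries_div_hasSum_exp z
  have hs : Summable (fun k : ℕ => z ^ k / (Nat.factorial k : ℂ)) := hsum.summable
  have h1 : Complex.exp z - ∑ k ∈ Finset.range r, z ^ k / (Nat.factorial k : ℂ)
      = ∑' k : ℕ, z ^ (k + r) / (Nat.factorial (k + r) : ℂ) := by
    have h := Summable.sum_add_tsum_nat_add (f := fun k : ℕ => z ^ k / (Nat.factorial k : ℂ)) r hs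
    rw [hsum.tsum_eq] at h
    rw [← h]; ring
  rw [h1]
  -- bound by the real tail series
  have hterm : ∀ k : ℕ, ‖z ^ (k + r) / (Nat.factorial (k + r) : ℂ)‖
      ≤ ‖z‖ ^ r / (Nat.factorial r : ℝ) * (‖z‖ ^ k / (Nat.factorial k : ℝ)) := by
    intro k
    have hfac : (Nat.factorial k : ℝ) * (Nat.factorial r : ℝ) ≤ (Nat.factorial (k + r) : ℝ) := by
      exact_mod_cast Nat.le_of_dvd (Nat.factorial_pos _)
        (Nat.factorial_mul_factorial_dvd_factorial_add k r)
    have hkpos : (0:ℝ) < (Nat.factorial k : ℝ) * (Nat.factorial r : ℝ) := by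
      positivity
    rw [norm_div, norm_pow]
    simp only [Complex.norm_natCast]
    rw [div_mul_div_comm, ← pow_add]
    rw [add_comm r k, mul_comm ((Nat.factorial r : ℝ)) _]
    exact div_le_div_of_nonneg_left (by positivity) hkpos hfac
  have hsr : Summable (fun k : ℕ => ‖z‖ ^ r / (Nat.factorial r : ℝ)
      * (‖z‖ ^ k / (Nat.factorial k : ℝ))) := by
    apply Summable.mul_left
    have := NormedSpace.expSeries_div_summable (‖z‖)
    simpa using this
  have hns : Summable (fun k : ℕ => ‖z ^ (k + r) / (Nat.factorial (k + r) : ℂ)‖) :=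
    Summable.of_nonneg_of_le (fun k => norm_nonneg _) hterm hsr
  calc ‖∑' k : ℕ, z ^ (k + r) / (Nat.factorial (k + r) : ℂ)‖
      ≤ ∑' k : ℕ, ‖z ^ (k + r) / (Nat.factorial (k + r) : ℂ)‖ := norm_tsum_le_tsum_norm hns
    _ ≤ ∑' k : ℕ, ‖z‖ ^ r / (Nat.factorial r : ℝ) * (‖z‖ ^ k / (Nat.factorial k : ℝ)) :=
        Summable.tsum_le_tsum hterm hns hsr
    _ = ‖z‖ ^ r / (Nat.factorial r : ℝ) * ∑' k : ℕ, (‖z‖ ^ k / (Nat.factorial k : ℝ)) := by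
        rw [tsum_mul_left]
    _ = ‖z‖ ^ r * Real.exp ‖z‖ / (Nat.factorial r : ℝ) := by
        have : ∑' k : ℕ, (‖z‖ ^ k / (Nat.factorial k : ℝ)) = Real.exp ‖z‖ := by
          rw [Real.exp_eq_exp_ℝ, NormedSpace.exp_eq_tsum_div]
        rw [this]; ring

theorem oscillatory_kernel_low_rank_approx
    (m n : ℕ) (u : Fin m → ℝ) (v : Fin n → ℝ) (ω c : ℝ) (hc : 0 ≤ c)
    (hbound : ∀ (i : Fin m) (j : Fin n), |ω * u i * v j| ≤ c)
    (D : Matrix (Fin m) (Fin n) ℂ)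
    (hD : ∀ (i : Fin m) (j : Fin n),
      D i j = Complex.exp (-Complex.I * ((ω * u i * v j : ℝ) : ℂ)))
    (r : ℕ) (hr : 1 ≤ r) :
    ∃ B : Matrix (Fin m) (Fin n) ℂ,
      (∀ (i : Fin m) (j : Fin n),
        B i j = ∑ k ∈ Finset.range r,
          (-Complex.I * (ω : ℂ)) ^ k * ((u i : ℂ)) ^ k * ((v j : ℂ)) ^ k / (Nat.factorial k : ℂ)) ∧
      B.rank ≤ r ∧
      ∀ (i : Fin m) (j : Fin n),
        ‖D i j - B i j‖ ≤ c ^ r * Real.exp c / (Nat.factorial r : ℝ) := by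
  set P : Matrix (Fin m) (Fin r) ℂ :=
    Matrix.of fun i k => (-Complex.I * (ω : ℂ)) ^ (k : ℕ) * ((u i : ℂ)) ^ (k : ℕ)
      / (Nat.factorial (k : ℕ) : ℂ) with hP
  set Q : Matrix (Fin r) (Fin n) ℂ := Matrix.of fun k j => ((v j : ℂ)) ^ (k : ℕ) with hQ
  refine ⟨P * Q, ?_, ?_, ?_⟩
  · intro i j
    rw [Matrix.mul_apply]
    rw [← Fin.sum_univ_eq_sum_range
      (fun k => (-Complex.I * (ω : ℂ)) ^ k * ((u i : ℂ)) ^ k * ((v j : ℂ)) ^ k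
        / (Nat.factorial k : ℂ)) r]
    apply Finset.sum_congr rfl
    intro k _
    simp [hP, hQ]
    ring
  · calc (P * Q).rank ≤ P.rank := Matrix.rank_mul_le_left P Q
      _ ≤ r := Matrix.rank_le_card_width P |>.trans (by simp)
  · intro i j
    set t : ℝ := ω * u i * v j with ht
    set z : ℂ := -Complex.I * (t : ℂ) with hz
    have hBij : (P * Q) i j = ∑ k ∈ Finset.range r, z ^ k / (Nat.factorial k : ℂ) := by
      rw [Matrix.mul_apply]
      rw [← Fin.sum_univ_eq_sum_range (fun k => z ^ k / (Nat.factorial k : ℂ)) r]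
      apply Finset.sum_congr rfl
      intro k _
      simp only [hP, hQ, Matrix.of_apply, hz, ht]
      push_cast
      ring
    rw [hD i j, hBij, ← ht, ← hz]
    have h1 := exp_taylor_remainder_aux z r
    have hnz : ‖z‖ = |t| := by
      rw [hz]
      rw [norm_mul, norm_neg, Complex.norm_I, one_mul, Complex.norm_real, Real.norm_eq_abs]
    have hle : ‖z‖ ≤ c := by rw [hnz]; exact hbound i j
    refine h1.trans ?_
    apply div_le_div_of_nonneg_right ?_ (by positivity)
    exact mul_le_mul (pow_le_pow_left₀ (norm_nonneg z) hle r)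
      (Real.exp_le_exp.2 hle) (Real.exp_pos _).le (by positivity)
end

section
/- Let K be an m×n matrix over a field, and suppose the index rectangle Fin m × Fin n is partitioned into finitely many combinatorial rectangles: there are T pairs of sets p t ⊆ Fin m and q t ⊆ Fin n (for t in Fin T) such that every index pair (i, j) lies in exactly one product set p t × q t. Then rank K ≤ ∑_{t} rank of the submatrix of K with rows restricted to p t and columns restricted to q t. -/
open Matrix

lemma matrix_rank_add_le {F : Type*} [Field F] {m n : ℕ}
    (A B : Matrix (Fin m) (Fin n) F) : (A + B).rank ≤ A.rank + B.rank := by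
  simp only [Matrix.rank]
  have h : LinearMap.range (A + B).mulVecLin ≤
      LinearMap.range A.mulVecLin ⊔ LinearMap.range B.mulVecLin := by
    rintro x ⟨v, rfl⟩
    rw [Matrix.mulVecLin_add]
    exact Submodule.add_mem_sup (LinearMap.mem_range_self _ v) (LinearMap.mem_range_self _ v)
  exact le_trans (Submodule.finrank_mono h)
    (Submodule.finrank_add_le_finrank_add_finrank _ _)

lemma rank_sum_le' {F : Type*} [Field F] {m n : ℕ} {ι : Type*} (s : Finset ι)
    (f : ι → Matrix (Fin m) (Fin n) F) :
    (∑ i ∈ s, f i).rank ≤ ∑ i ∈ s, (f i).rank := by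
  classical
  induction s using Finset.cons_induction with
  | empty => simp
  | cons a s ha ih =>
      rw [Finset.sum_cons, Finset.sum_cons]
      exact le_trans (matrix_rank_add_le _ _) (add_le_add le_rfl ih)

theorem rank_le_sum_rank_of_rectangle_partition
    {F : Type*} [Field F] (m n T : ℕ)
    (K : Matrix (Fin m) (Fin n) F)
    (p : Fin T → Finset (Fin m)) (q : Fin T → Finset (Fin n))
    (hpart : ∀ (i : Fin m) (j : Fin n), ∃! t : Fin T, i ∈ p t ∧ j ∈ q t) :
    K.rank ≤ ∑ t : Fin T,
      (K.submatrix (fun i : {a // a ∈ p t} => (i : Fin m))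
        (fun j : {b // b ∈ q t} => (j : Fin n))).rank := by
  classical
  set M : Fin T → Matrix (Fin m) (Fin n) F :=
    fun t i j => if i ∈ p t ∧ j ∈ q t then K i j else 0 with hM
  have hK : K = ∑ t : Fin T, M t := by
    ext i j
    obtain ⟨t0, ht0, huniq⟩ := hpart i j
    rw [Matrix.sum_apply]
    rw [Finset.sum_eq_single t0]
    · simp [hM, ht0]
    · intro t _ hne
      simp only [hM]
      rw [if_neg]
      intro h
      exact hne (huniq t h)
    · simp
  have hMrank : ∀ t, (M t).rank ≤
      (K.submatrix (fun i : {a // a ∈ p t} => (i : Fin m))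
        (fun j : {b // b ∈ q t} => (j : Fin n))).rank := by
    intro t
    set S := K.submatrix (fun i : {a // a ∈ p t} => (i : Fin m))
        (fun j : {b // b ∈ q t} => (j : Fin n)) with hS
    set P : Matrix (Fin m) {a // a ∈ p t} F := fun i a => if (a : Fin m) = i then 1 else 0
    set Q : Matrix {b // b ∈ q t} (Fin n) F := fun b j => if (b : Fin n) = j then 1 else 0
    have heq : M t = P * (S * Q) := by
      ext i j
      rw [Matrix.mul_apply]
      by_cases hi : i ∈ p t
      · rw [Finset.sum_eq_single (⟨i, hi⟩ : {a // a ∈ p t})]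
        · simp only [P, if_pos rfl, one_mul, Matrix.mul_apply, S, Matrix.submatrix_apply]
          by_cases hj : j ∈ q t
          · rw [Finset.sum_eq_single (⟨j, hj⟩ : {b // b ∈ q t})]
            · simp [hM, Q, hi, hj]
            · intro b _ hne
              simp only [Q]
              rw [if_neg, mul_zero]
              intro h; exact hne (Subtype.ext h)
            · simp
          · rw [Finset.sum_eq_zero]
            · simp [hM, hj]
            · intro b _
              simp only [Q]
              rw [if_neg, mul_zero]
              intro h; exact hj (h ▸ b.2)
        · intro a _ hne
          simp only [P]
          rw [if_neg, zero_mul]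
          intro h; exact hne (Subtype.ext h)
        · simp
      · rw [Finset.sum_eq_zero]
        · simp [hM, hi]
        · intro a _
          simp only [P]
          rw [if_neg, zero_mul]
          intro h; exact hi (h ▸ a.2)
    rw [heq]
    exact le_trans (Matrix.rank_mul_le_right _ _) (Matrix.rank_mul_le_left _ _)
  calc K.rank = (∑ t : Fin T, M t).rank := by rw [← hK]
    _ ≤ ∑ t : Fin T, (M t).rank := rank_sum_le' _ _
    _ ≤ _ := Finset.sum_le_sum fun t _ => hMrank t
end
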